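/- For every integer n ≥ 1 and all real numbers q, x, t with (1+x)(x+t)(1+xt) ≠ 0, one has Σ_{σ∈D_n} q^{cyc σ} t^{exc σ} = ((1+xt)/(1+x))^{n} · Σ_{σ∈D_n} q^{cyc σ} · ((1+x)² t/((x+t)(1+xt)))^{cpk σ} · ((x+t)/(1+xt))^{exc σ}. -/

import Mathlib

open Finset

open scoped Classical

noncomputable section

namespace EulerExc

variable {n : ℕ}

/-- 1-based value of `σ` at position `k ∈ [1,n]`, with boundary convention
`σ(0) = σ(n+1) = 0` outside. -/
def sv (σ : Equiv.Perm (Fin n)) (k : ℕ) : ℕ :=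
  if h : 1 ≤ k ∧ k ≤ n then ((σ ⟨k - 1, by omega⟩ : Fin n) : ℕ) + 1 else 0

/-- 1-based value with boundary convention `σ(0) = 0`, `σ(n+1) = ∞`. -/
def svInf (σ : Equiv.Perm (Fin n)) (k : ℕ) : ℕ :=
  if k = 0 then 0 else if k ≤ n then sv σ k else n + 1

/-- number of excedances -/
def exc (σ : Equiv.Perm (Fin n)) : ℕ := (univ.filter fun i : Fin n => i < σ i).card

/-- number of fixed points -/
def fixc (σ : Equiv.Perm (Fin n)) : ℕ := (univ.filter fun i : Fin n => σ i = i).card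

/-- number of drops -/
def dropc (σ : Equiv.Perm (Fin n)) : ℕ := (univ.filter fun i : Fin n => σ i < i).card

/-- number of inversions -/
def inv (σ : Equiv.Perm (Fin n)) : ℕ :=
  (univ.filter fun p : Fin n × Fin n => p.1 < p.2 ∧ σ p.2 < σ p.1).card

/-- number of descents -/
def des (σ : Equiv.Perm (Fin n)) : ℕ :=
  ((Icc 1 (n - 1)).filter fun i => sv σ (i + 1) < sv σ i).card

/-- number of ascents -/
def asc (σ : Equiv.Perm (Fin n)) : ℕ :=
  ((Icc 1 (n - 1)).filter fun i => sv σ i < sv σ (i + 1)).card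

/-- crossing number: pairs `(i,j)` with `j < i < σ(j) < σ(i)` or `σ(i) < σ(j) ≤ i < j` -/
def cros (σ : Equiv.Perm (Fin n)) : ℕ :=
  (univ.filter fun p : Fin n × Fin n =>
    (p.2 < p.1 ∧ p.1 < σ p.2 ∧ σ p.2 < σ p.1) ∨
    (σ p.1 < σ p.2 ∧ σ p.2 ≤ p.1 ∧ p.1 < p.2)).card

/-- nesting number: pairs `(i,j)` with `j < i < σ(i) < σ(j)` or `σ(j) < σ(i) ≤ i < j` -/
def nest (σ : Equiv.Perm (Fin n)) : ℕ :=
  (univ.filter fun p : Fin n × Fin n =>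
    (p.2 < p.1 ∧ p.1 < σ p.1 ∧ σ p.1 < σ p.2) ∨
    (σ p.2 < σ p.1 ∧ σ p.1 ≤ p.1 ∧ p.1 < p.2)).card

def icr (σ : Equiv.Perm (Fin n)) : ℕ := cros σ⁻¹

/-- number of cyclic peaks -/
def cpk (σ : Equiv.Perm (Fin n)) : ℕ :=
  (univ.filter fun x : Fin n => σ⁻¹ x < x ∧ σ x < x).card

/-- number of cyclic valleys -/
def cval (σ : Equiv.Perm (Fin n)) : ℕ :=
  (univ.filter fun x : Fin n => x < σ⁻¹ x ∧ x < σ x).card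

/-- number of double excedances -/
def cda (σ : Equiv.Perm (Fin n)) : ℕ :=
  (univ.filter fun x : Fin n => σ⁻¹ x < x ∧ x < σ x).card

/-- number of double drops -/
def cdd (σ : Equiv.Perm (Fin n)) : ℕ :=
  (univ.filter fun x : Fin n => x < σ⁻¹ x ∧ σ x < x).card

/-- number of cycles (including fixed points) -/
def cyc (σ : Equiv.Perm (Fin n)) : ℕ := σ.cycleType.card + fixc σ

/-- the star companion `σ*` of `σ`: a permutation of `{0,1,…,n}` with
`σ*(0) = n` and `σ*(i) = σ(i) - 1` for `i ∈ [n]`. -/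
def star (σ : Equiv.Perm (Fin n)) : Equiv.Perm (Fin (n + 1)) :=
  (Equiv.Perm.decomposeFin.symm (0, σ)).trans (Equiv.subRight (1 : Fin (n + 1)))

def cpkStar (σ : Equiv.Perm (Fin n)) : ℕ :=
  (univ.filter fun i : Fin (n + 1) =>
    1 ≤ (i : ℕ) ∧ (i : ℕ) < n ∧ (star σ)⁻¹ i < i ∧ star σ i < i).card

def cdaStar (σ : Equiv.Perm (Fin n)) : ℕ :=
  (univ.filter fun i : Fin (n + 1) =>
    1 ≤ (i : ℕ) ∧ (i : ℕ) < n ∧ (star σ)⁻¹ i < i ∧ i < star σ i).card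

def cddStar (σ : Equiv.Perm (Fin n)) : ℕ :=
  (univ.filter fun i : Fin (n + 1) =>
    1 ≤ (i : ℕ) ∧ (i : ℕ) < n ∧ i < (star σ)⁻¹ i ∧ star σ i < i).card

def fixStar (σ : Equiv.Perm (Fin n)) : ℕ :=
  (univ.filter fun i : Fin (n + 1) =>
    1 ≤ (i : ℕ) ∧ (i : ℕ) < n ∧ star σ i = i).card

def cycStar (σ : Equiv.Perm (Fin n)) : ℕ := cyc (star σ)

/-- number of occurrences of the vincular pattern 31-2 -/
def p31_2 (σ : Equiv.Perm (Fin n)) : ℕ :=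
  ((Icc 1 n ×ˢ Icc 1 n).filter fun p =>
    p.1 + 1 < p.2 ∧ sv σ (p.1 + 1) < sv σ p.2 ∧ sv σ p.2 < sv σ p.1).card

/-- number of occurrences of the vincular pattern 2-13 -/
def p2_13 (σ : Equiv.Perm (Fin n)) : ℕ :=
  ((Icc 1 n ×ˢ Icc 1 n).filter fun p =>
    p.2 < p.1 ∧ p.1 < n ∧ sv σ p.1 < sv σ p.2 ∧ sv σ p.2 < sv σ (p.1 + 1)).card

/-- number of occurrences of the vincular pattern 2-31 -/
def p2_31 (σ : Equiv.Perm (Fin n)) : ℕ :=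
  ((Icc 1 n ×ˢ Icc 1 n).filter fun p =>
    p.2 < p.1 ∧ p.1 < n ∧ sv σ (p.1 + 1) < sv σ p.2 ∧ sv σ p.2 < sv σ p.1).card

/-- number of peaks (convention 0--0) -/
def pk (σ : Equiv.Perm (Fin n)) : ℕ :=
  ((Icc 1 n).filter fun i => sv σ (i - 1) < sv σ i ∧ sv σ (i + 1) < sv σ i).card

/-- number of valleys (convention 0--0) -/
def vall (σ : Equiv.Perm (Fin n)) : ℕ :=
  ((Icc 1 n).filter fun i => sv σ i < sv σ (i - 1) ∧ sv σ i < sv σ (i + 1)).card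

/-- number of double ascents (convention 0--0) -/
def da (σ : Equiv.Perm (Fin n)) : ℕ :=
  ((Icc 1 n).filter fun i => sv σ (i - 1) < sv σ i ∧ sv σ i < sv σ (i + 1)).card

/-- number of double descents (convention 0--0) -/
def dd (σ : Equiv.Perm (Fin n)) : ℕ :=
  ((Icc 1 n).filter fun i => sv σ i < sv σ (i - 1) ∧ sv σ (i + 1) < sv σ i).card

/-- number of peaks (convention 0--∞) -/
def lpk (σ : Equiv.Perm (Fin n)) : ℕ :=
  ((Icc 1 n).filter fun i => svInf σ (i - 1) < svInf σ i ∧ svInf σ (i + 1) < svInf σ i).card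

/-- number of valleys (convention 0--∞) -/
def lval (σ : Equiv.Perm (Fin n)) : ℕ :=
  ((Icc 1 n).filter fun i => svInf σ i < svInf σ (i - 1) ∧ svInf σ i < svInf σ (i + 1)).card

/-- number of double ascents (convention 0--∞) -/
def lda (σ : Equiv.Perm (Fin n)) : ℕ :=
  ((Icc 1 n).filter fun i => svInf σ (i - 1) < svInf σ i ∧ svInf σ i < svInf σ (i + 1)).card

/-- number of double descents (convention 0--∞) -/
def ldd (σ : Equiv.Perm (Fin n)) : ℕ :=
  ((Icc 1 n).filter fun i => svInf σ i < svInf σ (i - 1) ∧ svInf σ (i + 1) < svInf σ i).card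

/-- number of foremaxima: double ascents (convention 0--∞) that are
left-to-right maxima -/
def fmax (σ : Equiv.Perm (Fin n)) : ℕ :=
  ((Icc 1 n).filter fun i =>
    svInf σ (i - 1) < svInf σ i ∧ svInf σ i < svInf σ (i + 1) ∧
    ∀ j ∈ Icc 1 i, sv σ j ≤ sv σ i).card

/-- `scda σ = #{i ∈ [n-1] : i < σ(i) and i+1 > σ⁻¹(i+1)}` -/
def scda (σ : Equiv.Perm (Fin n)) : ℕ :=
  ((Icc 1 (n - 1)).filter fun i => i < sv σ i ∧ sv σ⁻¹ (i + 1) < i + 1).card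

/-- `σ` avoids the pattern 321 -/
def Avoids321 (σ : Equiv.Perm (Fin n)) : Prop :=
  ¬ ∃ i j k : Fin n, i < j ∧ j < k ∧ σ k < σ j ∧ σ j < σ i

/-- `σ` avoids the pattern 231 -/
def Avoids231 (σ : Equiv.Perm (Fin n)) : Prop :=
  ¬ ∃ i j k : Fin n, i < j ∧ j < k ∧ σ k < σ i ∧ σ i < σ j

/-- `σ` avoids the pattern 312 -/
def Avoids312 (σ : Equiv.Perm (Fin n)) : Prop :=
  ¬ ∃ i j k : Fin n, i < j ∧ j < k ∧ σ j < σ k ∧ σ k < σ i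

/-- `σ` avoids the pattern 213 -/
def Avoids213 (σ : Equiv.Perm (Fin n)) : Prop :=
  ¬ ∃ i j k : Fin n, i < j ∧ j < k ∧ σ j < σ i ∧ σ i < σ k

/-- `σ` avoids the pattern 132 -/
def Avoids132 (σ : Equiv.Perm (Fin n)) : Prop :=
  ¬ ∃ i j k : Fin n, i < j ∧ j < k ∧ σ i < σ k ∧ σ k < σ j

/-- `σ` is a derangement -/
def IsDerangement (σ : Equiv.Perm (Fin n)) : Prop := ∀ i, σ i ≠ i

/-! Signed permutations `B_n`, encoded as a pair `(σ, ε)` of an ordinary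
permutation (the absolute value) together with signs attached to positions. -/

/-- number of negative values -/
def negB (ε : Fin n → Bool) : ℕ := (univ.filter fun i => ε i = true).card

/-- number of type B excedances, w.r.t. the friends order -/
def excB (σ : Equiv.Perm (Fin n)) (ε : Fin n → Bool) : ℕ :=
  (univ.filter fun i : Fin n => i < σ i ∨ (σ i = i ∧ ε i = true)).card

/-- the (1-based, signed, integer) value of the signed permutation `(σ, ε)` at
position `k ∈ [1,n]`, with `0` outside. -/
def signedVal (σ : Equiv.Perm (Fin n)) (ε : Fin n → Bool) (k : ℕ) : ℤ :=
  if h : 1 ≤ k ∧ k ≤ n then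
    (if ε ⟨k - 1, by omega⟩ then -(((σ ⟨k - 1, by omega⟩ : Fin n) : ℕ) + 1 : ℤ)
     else (((σ ⟨k - 1, by omega⟩ : Fin n) : ℕ) + 1 : ℤ))
  else 0

/-- number of type B descents -/
def desB (σ : Equiv.Perm (Fin n)) (ε : Fin n → Bool) : ℕ :=
  ((range n).filter fun i => signedVal σ ε (i + 1) < signedVal σ ε i).card


section Hopping

private lemma perm_apply_inv_self {α : Type*} (f : Equiv.Perm α) (x : α) : f (f⁻¹ x) = x :=
  f.apply_symm_apply x

private lemma perm_inv_apply_self {α : Type*} (f : Equiv.Perm α) (x : α) : f⁻¹ (f x) = x :=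
  f.symm_apply_apply x

open Equiv
variable {n : ℕ}

private lemma hpow_succ (σ : Equiv.Perm (Fin n)) (m : ℕ) (x : Fin n) :
    (σ ^ (m + 1)) x = σ ((σ ^ m) x) := by
  rw [pow_succ', Equiv.Perm.mul_apply]

private lemma hmem_periodicPts (σ : Equiv.Perm (Fin n)) (x : Fin n) :
    x ∈ Function.periodicPts (⇑σ) :=
  ⟨orderOf σ, orderOf_pos σ, by
    show (⇑σ)^[orderOf σ] x = x
    rw [Equiv.Perm.iterate_eq_pow, pow_orderOf_eq_one, Equiv.Perm.one_apply]⟩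

private lemma hpow_minPeriod (σ : Equiv.Perm (Fin n)) (x : Fin n) :
    (σ ^ Function.minimalPeriod (⇑σ) x) x = x := by
  have h := Function.iterate_minimalPeriod (f := ⇑σ) (x := x)
  rwa [Equiv.Perm.iterate_eq_pow] at h

private lemma hpow_inj (σ : Equiv.Perm (Fin n)) (x : Fin n) {i j : ℕ}
    (hi : i < Function.minimalPeriod (⇑σ) x) (hj : j < Function.minimalPeriod (⇑σ) x)
    (hij : (σ ^ i) x = (σ ^ j) x) : i = j := by
  apply Function.iterate_injOn_Iio_minimalPeriod (Set.mem_Iio.2 hi) (Set.mem_Iio.2 hj)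
  simpa [Equiv.Perm.iterate_eq_pow] using hij

noncomputable def hop (σ : Equiv.Perm (Fin n)) (x : Fin n) : Equiv.Perm (Fin n) :=
  if h : ∃ j, 0 < j ∧ (σ ^ j) x ≤ x then
    σ * (Equiv.swap (σ⁻¹ x) x * Equiv.swap x ((σ ^ (Nat.find h - 1)) x))
  else σ

private lemma hop_core {σ : Equiv.Perm (Fin n)} {x : Fin n}
    (hx1 : σ⁻¹ x < x) (hx2 : x < σ x) :
    ∃ c : Fin n, x < c ∧ σ c < x ∧ σ.SameCycle x c ∧
      hop σ x (σ⁻¹ x) = σ x ∧ hop σ x x = σ c ∧ hop σ x c = x ∧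
      (∀ y, y ≠ σ⁻¹ x → y ≠ x → y ≠ c → hop σ x y = σ y) ∧
      (hop σ x)⁻¹ (σ x) = σ⁻¹ x ∧ (hop σ x)⁻¹ x = c ∧ (hop σ x)⁻¹ (σ c) = x ∧
      (∀ y, y ≠ σ x → y ≠ x → y ≠ σ c → (hop σ x)⁻¹ y = σ⁻¹ y) ∧
      hop ((hop σ x)⁻¹) x = σ⁻¹ ∧ (hop σ x).SameCycle x (σ⁻¹ x) := by
  classical
  set L := Function.minimalPeriod (⇑σ) x with hLdef
  have hLpos : 0 < L := Function.minimalPeriod_pos_of_mem_periodicPts (hmem_periodicPts σ x)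
  have hLx : (σ ^ L) x = x := hpow_minPeriod σ x
  have hL1 : (σ ^ (L - 1)) x = σ⁻¹ x := by
    have h1 : σ ((σ ^ (L - 1)) x) = x := by
      rw [← hpow_succ, Nat.sub_add_cancel hLpos]; exact hLx
    exact Equiv.Perm.eq_inv_iff_eq.2 h1
  have hL2 : 2 ≤ L := by
    rcases Nat.lt_or_ge L 2 with hcon | hgood
    · exfalso
      have hL1' : L = 1 := by omega
      rw [hL1', pow_one] at hLx
      exact hx2.ne' hLx
    · exact hgood
  have hex : ∃ j, 0 < j ∧ (σ ^ j) x ≤ x := ⟨L - 1, by omega, le_of_lt (hL1 ▸ hx1)⟩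
  set j := Nat.find hex with hjdef
  obtain ⟨hjpos, hjle⟩ := Nat.find_spec hex
  rw [← hjdef] at hjpos hjle
  have hjmin : ∀ i, i < j → ¬(0 < i ∧ (σ ^ i) x ≤ x) := fun i hi => Nat.find_min hex hi
  have hjL : j ≤ L - 1 := Nat.find_min' hex ⟨by omega, le_of_lt (hL1 ▸ hx1)⟩
  have hgt : ∀ i, 0 < i → i < j → x < (σ ^ i) x := by
    intro i h0 hij
    have h := hjmin i hij
    push_neg at h
    exact h h0
  have hj2 : 2 ≤ j := by
    by_contra hcon
    push_neg at hcon
    have hj1 : j = 1 := by omega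
    rw [hj1, pow_one] at hjle
    exact absurd hjle (not_le.2 hx2)
  have hdlt : (σ ^ j) x < x := by
    rcases lt_or_eq_of_le hjle with h | h
    · exact h
    · exfalso
      have h1 : σ ((σ ^ (j - 1)) x) = x := by
        rw [← hpow_succ, Nat.sub_add_cancel (by omega)]; exact h
      have h2 : (σ ^ (j - 1)) x = σ⁻¹ x := Equiv.Perm.eq_inv_iff_eq.2 h1
      exact hjmin (j - 1) (by omega) ⟨by omega, le_of_lt (h2 ▸ hx1)⟩
  set c := (σ ^ (j - 1)) x with hcdef
  have hck : x < c := hgt (j - 1) (by omega) (by omega)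
  have hd : σ c = (σ ^ j) x := by
    have hj1 : j - 1 + 1 = j := by omega
    rw [hcdef, ← hpow_succ, hj1]
  have hdx : σ c < x := hd ▸ hdlt
  have hax : σ⁻¹ x ≠ x := hx1.ne
  have hcx : c ≠ x := hck.ne'
  have hac : σ⁻¹ x ≠ c := (hx1.trans hck).ne
  -- same cycle facts for σ
  have hscc : σ.SameCycle x c := ⟨(j - 1 : ℕ), by rw [zpow_natCast]⟩
  -- hop formula
  have hform : hop σ x = σ * (Equiv.swap (σ⁻¹ x) x * Equiv.swap x c) := by
    rw [hop, dif_pos hex]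
  -- pointwise values
  have hva : hop σ x (σ⁻¹ x) = σ x := by
    rw [hform]
    simp only [Equiv.Perm.mul_apply]
    rw [Equiv.swap_apply_of_ne_of_ne hax hac, Equiv.swap_apply_left]
  have hvx : hop σ x x = σ c := by
    rw [hform]
    simp only [Equiv.Perm.mul_apply]
    rw [Equiv.swap_apply_left, Equiv.swap_apply_of_ne_of_ne (Ne.symm hac) hcx]
  have hvc : hop σ x c = x := by
    rw [hform]
    simp only [Equiv.Perm.mul_apply]
    rw [Equiv.swap_apply_right, Equiv.swap_apply_right, perm_apply_inv_self]
  have hvo : ∀ y, y ≠ σ⁻¹ x → y ≠ x → y ≠ c → hop σ x y = σ y := by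
    intro y h1 h2 h3
    rw [hform]
    simp only [Equiv.Perm.mul_apply]
    rw [Equiv.swap_apply_of_ne_of_ne h2 h3, Equiv.swap_apply_of_ne_of_ne h1 h2]
  -- the inverse permutation ρ
  set ρ := (hop σ x)⁻¹ with hρ
  have hρb : ρ (σ x) = σ⁻¹ x := Equiv.Perm.inv_eq_iff_eq.2 hva.symm
  have hρx : ρ x = c := Equiv.Perm.inv_eq_iff_eq.2 hvc.symm
  have hρd : ρ (σ c) = x := Equiv.Perm.inv_eq_iff_eq.2 hvx.symm
  have hρo : ∀ y, y ≠ σ x → y ≠ x → y ≠ σ c → ρ y = σ⁻¹ y := by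
    intro y h1 h2 h3
    apply Equiv.Perm.inv_eq_iff_eq.2
    have e1 : σ⁻¹ y ≠ σ⁻¹ x := fun e => h2 (by
      have := congrArg σ e
      simpa [perm_apply_inv_self] using this)
    have e2 : σ⁻¹ y ≠ x := fun e => h1 (by rw [← e, perm_apply_inv_self])
    have e3 : σ⁻¹ y ≠ c := fun e => h3 (by rw [← e, perm_apply_inv_self])
    rw [hvo _ e1 e2 e3, perm_apply_inv_self]
  have hjL2 : j < L := by omega
  have hrpow : ∀ i, 1 ≤ i → i ≤ j - 1 → (ρ ^ i) x = (σ ^ (j - i)) x := by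
    intro i
    induction i with
    | zero => intro h1 h2; omega
    | succ m ih =>
      intro hi1 hik
      rcases Nat.eq_or_lt_of_le hi1 with h1 | h1
      · have hm : m = 0 := by omega
        subst hm
        rw [pow_one]
        rw [hρx, hcdef]
      · have hm1 : 1 ≤ m := by omega
        have hmk : m ≤ j - 1 := by omega
        have ihm := ih hm1 hmk
        rw [hpow_succ, ihm]
        have hm2a : 2 ≤ j - m := by omega
        have hm2b : j - m ≤ j - 1 := by omega
        have hne1 : (σ ^ (j - m)) x ≠ σ x := by
          intro e
          have e' : (σ ^ (j - m)) x = (σ ^ 1) x := by rw [e, pow_one]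
          have := hpow_inj σ x (show j - m < L by omega) (show 1 < L by omega) e'
          omega
        have hne2 : (σ ^ (j - m)) x ≠ x := by
          intro e
          have e' : (σ ^ (j - m)) x = (σ ^ 0) x := by rw [e]; rfl
          have := hpow_inj σ x (show j - m < L by omega) (show 0 < L by omega) e'
          omega
        have hne3 : (σ ^ (j - m)) x ≠ σ c := by
          intro e
          rw [hd] at e
          have := hpow_inj σ x (show j - m < L by omega) (show j < L by omega) e
          omega
        rw [hρo _ hne1 hne2 hne3]
        have h4 : (σ ^ (j - m)) x = σ ((σ ^ (j - m - 1)) x) := by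
          rw [← hpow_succ]
          have : j - m - 1 + 1 = j - m := by omega
          rw [this]
        rw [h4, perm_inv_apply_self]
        have : j - m - 1 = j - (m + 1) := by omega
        rw [this]
  have hρj : (ρ ^ j) x = σ⁻¹ x := by
    have h1 : (ρ ^ (j - 1)) x = σ x := by
      rw [hrpow (j - 1) (by omega) (by omega)]
      have h2 : j - (j - 1) = 1 := by omega
      rw [h2, pow_one]
    have h2 : j - 1 + 1 = j := by omega
    calc (ρ ^ j) x = (ρ ^ (j - 1 + 1)) x := by rw [h2]
    _ = ρ ((ρ ^ (j - 1)) x) := hpow_succ ρ (j - 1) x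
    _ = ρ (σ x) := by rw [h1]
    _ = σ⁻¹ x := hρb
  have hsc : (hop σ x).SameCycle x (σ⁻¹ x) := by
    have h1 : Equiv.Perm.SameCycle ρ x (σ⁻¹ x) := ⟨(j : ℤ), by rw [zpow_natCast]; exact hρj⟩
    rw [hρ] at h1
    exact (Equiv.Perm.sameCycle_inv).1 h1
  have hex' : ∃ i, 0 < i ∧ (ρ ^ i) x ≤ x := ⟨j, by omega, by rw [hρj]; exact le_of_lt hx1⟩
  have hfind' : Nat.find hex' = j := by
    apply le_antisymm
    · exact Nat.find_le ⟨by omega, by rw [hρj]; exact le_of_lt hx1⟩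
    · rw [Nat.le_find_iff]
      intro m hm hcon
      obtain ⟨hm0, hmle⟩ := hcon
      have hlt : x < (ρ ^ m) x := by
        rw [hrpow m (by omega) (by omega)]
        exact hgt (j - m) (by omega) (by omega)
      exact absurd hmle (not_le.2 hlt)
  have hrt : hop ρ x = σ⁻¹ := by
    have hform' : hop ρ x
        = ρ * (Equiv.swap (ρ⁻¹ x) x * Equiv.swap x ((ρ ^ (Nat.find hex' - 1)) x)) := by
      rw [hop, dif_pos hex']
    have hρinvx : ρ⁻¹ x = σ c := by rw [hρ, inv_inv]; exact hvx
    have hρk : (ρ ^ (Nat.find hex' - 1)) x = σ x := by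
      rw [hfind', hrpow (j - 1) (by omega) (by omega)]
      have h2 : j - (j - 1) = 1 := by omega
      rw [h2, pow_one]
    rw [hform', hρinvx, hρk]
    have hbx : σ x ≠ x := hx2.ne'
    have hdxne : σ c ≠ x := hdx.ne
    have hbd : σ x ≠ σ c := fun e => hck.ne (σ.injective e)
    ext y
    simp only [Equiv.Perm.mul_apply, Equiv.Perm.coe_mul, Function.comp_apply]
    by_cases h1 : y = x
    · subst h1
      rw [Equiv.swap_apply_left, Equiv.swap_apply_of_ne_of_ne hbd hbx, hρb]
    · by_cases h2 : y = σ x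
      · subst h2
        rw [Equiv.swap_apply_right, Equiv.swap_apply_right, hρd, perm_inv_apply_self]
      · by_cases h3 : y = σ c
        · subst h3
          rw [Equiv.swap_apply_of_ne_of_ne hdxne (Ne.symm hbd), Equiv.swap_apply_left, hρx]
          simp [perm_inv_apply_self]
        · rw [Equiv.swap_apply_of_ne_of_ne h1 h2, Equiv.swap_apply_of_ne_of_ne h3 h1,
            hρo _ h2 h1 h3]
  exact ⟨c, hck, hdx, hscc, hva, hvx, hvc, hvo, hρb, hρx, hρd, hρo, hrt, hsc⟩


-- downstream lemmas about `hop`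
variable {σ : Equiv.Perm (Fin n)} {x : Fin n}

private lemma hop_out (hx1 : σ⁻¹ x < x) (hx2 : x < σ x) :
    ∀ y, y ≠ x → ((hop σ x) y < y ↔ σ y < y) ∧ (y < (hop σ x) y ↔ y < σ y) := by
  obtain ⟨c, hxc, hdx, -, hva, hvx, hvc, hvo, -, -, -, -, -, -⟩ := hop_core hx1 hx2
  intro y hyx
  by_cases h1 : y = σ⁻¹ x
  · subst h1
    rw [hva, perm_apply_inv_self]
    constructor
    · exact iff_of_false (by omega) (by omega)
    · exact iff_of_true (by omega) (by omega)
  · by_cases h3 : y = c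
    · subst h3
      rw [hvc]
      constructor
      · exact iff_of_true (by omega) (by omega)
      · exact iff_of_false (by omega) (by omega)
    · rw [hvo y h1 hyx h3]
      exact ⟨Iff.rfl, Iff.rfl⟩

private lemma hop_in (hx1 : σ⁻¹ x < x) (hx2 : x < σ x) :
    ∀ y, y ≠ x → ((hop σ x)⁻¹ y < y ↔ σ⁻¹ y < y) ∧ (y < (hop σ x)⁻¹ y ↔ y < σ⁻¹ y) := by
  obtain ⟨c, hxc, hdx, -, hva, hvx, hvc, hvo, hib, hix, hid, hio, -, -⟩ := hop_core hx1 hx2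
  intro y hyx
  by_cases h1 : y = σ x
  · subst h1
    rw [hib, perm_inv_apply_self]
    constructor
    · exact iff_of_true (by omega) (by omega)
    · exact iff_of_false (by omega) (by omega)
  · by_cases h2 : y = σ c
    · subst h2
      rw [hid, perm_inv_apply_self]
      constructor
      · exact iff_of_false (by omega) (by omega)
      · exact iff_of_true (by omega) (by omega)
    · rw [hio y h1 hyx h2]
      exact ⟨Iff.rfl, Iff.rfl⟩

private lemma hop_isD (hD : IsDerangement σ) (hx1 : σ⁻¹ x < x) (hx2 : x < σ x) :
    IsDerangement (hop σ x) := by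
  obtain ⟨c, hxc, hdx, -, hva, hvx, hvc, hvo, -, -, -, -, -, -⟩ := hop_core hx1 hx2
  intro y
  by_cases h1 : y = σ⁻¹ x
  · subst h1; rw [hva]; intro e; omega
  · by_cases h2 : y = x
    · subst h2; rw [hvx]; intro e; omega
    · by_cases h3 : y = c
      · subst h3; rw [hvc]; intro e; omega
      · rw [hvo y h1 h2 h3]; exact hD y

private lemma hop_cpk (hx1 : σ⁻¹ x < x) (hx2 : x < σ x) : cpk (hop σ x) = cpk σ := by
  obtain ⟨c, hxc, hdx, -, hva, hvx, hvc, hvo, hib, hix, hid, hio, -, -⟩ := hop_core hx1 hx2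
  unfold cpk
  congr 1
  ext y
  simp only [mem_filter, mem_univ, true_and]
  by_cases hyx : y = x
  · subst hyx
    rw [hix, hvx]
    exact iff_of_false (fun hcon => absurd hcon.1 (by omega))
      (fun hcon => absurd hcon.2 (by omega))
  · exact and_congr ((hop_in hx1 hx2 y hyx).1) ((hop_out hx1 hx2 y hyx).1)

private lemma hop_cval (hx1 : σ⁻¹ x < x) (hx2 : x < σ x) : cval (hop σ x) = cval σ := by
  obtain ⟨c, hxc, hdx, -, hva, hvx, hvc, hvo, hib, hix, hid, hio, -, -⟩ := hop_core hx1 hx2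
  unfold cval
  congr 1
  ext y
  simp only [mem_filter, mem_univ, true_and]
  by_cases hyx : y = x
  · subst hyx
    rw [hix, hvx]
    exact iff_of_false (fun hcon => absurd hcon.2 (by omega))
      (fun hcon => absurd hcon.1 (by omega))
  · exact and_congr ((hop_in hx1 hx2 y hyx).2) ((hop_out hx1 hx2 y hyx).2)

private lemma hop_cda (hx1 : σ⁻¹ x < x) (hx2 : x < σ x) : cda (hop σ x) + 1 = cda σ := by
  obtain ⟨c, hxc, hdx, -, hva, hvx, hvc, hvo, hib, hix, hid, hio, -, -⟩ := hop_core hx1 hx2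
  have hxmem : x ∈ univ.filter (fun y : Fin n => σ⁻¹ y < y ∧ y < σ y) := by
    simp only [mem_filter, mem_univ, true_and]; exact ⟨hx1, hx2⟩
  have hset : (univ.filter fun y : Fin n => (hop σ x)⁻¹ y < y ∧ y < (hop σ x) y)
      = (univ.filter fun y : Fin n => σ⁻¹ y < y ∧ y < σ y).erase x := by
    ext y
    simp only [mem_filter, mem_univ, true_and, Finset.mem_erase]
    by_cases hyx : y = x
    · subst hyx
      constructor
      · rintro ⟨h1, -⟩; rw [hix] at h1; omega
      · rintro ⟨h1, -⟩; exact absurd rfl h1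
    · rw [and_congr ((hop_in hx1 hx2 y hyx).1) ((hop_out hx1 hx2 y hyx).2)]
      simp [hyx]
  unfold cda
  rw [hset, Finset.card_erase_of_mem hxmem]
  have hpos : 0 < (univ.filter fun y : Fin n => σ⁻¹ y < y ∧ y < σ y).card :=
    Finset.card_pos.2 ⟨x, hxmem⟩
  omega

private lemma hop_cdd (hx1 : σ⁻¹ x < x) (hx2 : x < σ x) : cdd (hop σ x) = cdd σ + 1 := by
  obtain ⟨c, hxc, hdx, -, hva, hvx, hvc, hvo, hib, hix, hid, hio, -, -⟩ := hop_core hx1 hx2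
  have hxnot : x ∉ univ.filter (fun y : Fin n => y < σ⁻¹ y ∧ σ y < y) := by
    simp only [mem_filter, mem_univ, true_and, not_and]
    intro h1; omega
  have hset : (univ.filter fun y : Fin n => y < (hop σ x)⁻¹ y ∧ (hop σ x) y < y)
      = insert x (univ.filter fun y : Fin n => y < σ⁻¹ y ∧ σ y < y) := by
    ext y
    simp only [mem_filter, mem_univ, true_and, Finset.mem_insert]
    by_cases hyx : y = x
    · subst hyx
      simp only [true_or, iff_true]
      rw [hix, hvx]
      exact ⟨hxc, hdx⟩
    · rw [and_congr ((hop_in hx1 hx2 y hyx).2) ((hop_out hx1 hx2 y hyx).1)]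
      simp [hyx]
  unfold cdd
  rw [hset, Finset.card_insert_of_notMem hxnot]

private lemma hop_factors (hx1 : σ⁻¹ x < x) (hx2 : x < σ x) :
    (hop σ x).cycleFactorsFinset.card = σ.cycleFactorsFinset.card := by
  obtain ⟨c, hxc, hdx, hscc, hva, hvx, hvc, hvo, hib, hix, hid, hio, hrt, hsc⟩ :=
    hop_core hx1 hx2
  have hxs : x ∈ σ.support := Equiv.Perm.mem_support.2 hx2.ne'
  have hxs' : x ∈ (hop σ x).support := Equiv.Perm.mem_support.2 (by rw [hvx]; exact hdx.ne)
  have hmemγ : ∀ y, y = σ⁻¹ x ∨ y = x ∨ y = c → y ∈ (σ.cycleOf x).support := by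
    intro y hy
    rw [Equiv.Perm.mem_support_cycleOf_iff]
    refine ⟨?_, hxs⟩
    rcases hy with h | h | h
    · subst h; exact ⟨(-1 : ℤ), by simp⟩
    · subst h; exact ⟨(0 : ℤ), by simp⟩
    · subst h; exact hscc
  have hmemγ' : ∀ y, y = σ⁻¹ x ∨ y = x ∨ y = c → y ∈ ((hop σ x).cycleOf x).support := by
    intro y hy
    rw [Equiv.Perm.mem_support_cycleOf_iff]
    refine ⟨?_, hxs'⟩
    rcases hy with h | h | h
    · subst h; exact hsc
    · subst h; exact ⟨(0 : ℤ), by simp⟩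
    · subst h; exact ⟨(-1 : ℤ), by simp [hix]⟩
  have hγo : ∀ y, y ∉ (σ.cycleOf x).support → hop σ x y = σ y := by
    intro y hy
    by_contra hne
    by_cases h1 : y = σ⁻¹ x
    · exact hy (hmemγ y (Or.inl h1))
    · by_cases h2 : y = x
      · exact hy (hmemγ y (Or.inr (Or.inl h2)))
      · by_cases h3 : y = c
        · exact hy (hmemγ y (Or.inr (Or.inr h3)))
        · exact hne (hvo y h1 h2 h3)
  have hγ'o : ∀ y, y ∉ ((hop σ x).cycleOf x).support → hop σ x y = σ y := by
    intro y hy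
    by_contra hne
    by_cases h1 : y = σ⁻¹ x
    · exact hy (hmemγ' y (Or.inl h1))
    · by_cases h2 : y = x
      · exact hy (hmemγ' y (Or.inr (Or.inl h2)))
      · by_cases h3 : y = c
        · exact hy (hmemγ' y (Or.inr (Or.inr h3)))
        · exact hne (hvo y h1 h2 h3)
  have hγmem : σ.cycleOf x ∈ σ.cycleFactorsFinset :=
    Equiv.Perm.cycleOf_mem_cycleFactorsFinset_iff.2 hxs
  have hγ'mem : (hop σ x).cycleOf x ∈ (hop σ x).cycleFactorsFinset :=
    Equiv.Perm.cycleOf_mem_cycleFactorsFinset_iff.2 hxs'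
  have key1 : ∀ τ, τ ∈ σ.cycleFactorsFinset → τ ≠ σ.cycleOf x →
      τ ∈ (hop σ x).cycleFactorsFinset := by
    intro τ hτ hne
    have hdisj : τ.Disjoint (σ.cycleOf x) :=
      Equiv.Perm.cycleFactorsFinset_pairwise_disjoint σ (Finset.mem_coe.2 hτ)
        (Finset.mem_coe.2 hγmem) hne
    rw [Equiv.Perm.mem_cycleFactorsFinset_iff] at hτ ⊢
    refine ⟨hτ.1, fun y hy => ?_⟩
    have h1 := hτ.2 y hy
    have hyγ : y ∉ (σ.cycleOf x).support := by
      intro hyg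
      rcases hdisj y with h | h
      · exact (Equiv.Perm.mem_support.1 hy) h
      · exact (Equiv.Perm.mem_support.1 hyg) h
    rw [h1, ← hγo y hyγ]
  have key2 : ∀ τ, τ ∈ (hop σ x).cycleFactorsFinset → τ ≠ (hop σ x).cycleOf x →
      τ ∈ σ.cycleFactorsFinset ∧ τ ≠ σ.cycleOf x := by
    intro τ hτ hne
    have hdisj : τ.Disjoint ((hop σ x).cycleOf x) :=
      Equiv.Perm.cycleFactorsFinset_pairwise_disjoint (hop σ x) (Finset.mem_coe.2 hτ)
        (Finset.mem_coe.2 hγ'mem) hne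
    have hτ' := Equiv.Perm.mem_cycleFactorsFinset_iff.1 hτ
    have hsupp : ∀ y, y ∈ τ.support → y ∉ ((hop σ x).cycleOf x).support := by
      intro y hy hyg
      rcases hdisj y with h | h
      · exact (Equiv.Perm.mem_support.1 hy) h
      · exact (Equiv.Perm.mem_support.1 hyg) h
    constructor
    · rw [Equiv.Perm.mem_cycleFactorsFinset_iff]
      refine ⟨hτ'.1, fun y hy => ?_⟩
      rw [hτ'.2 y hy, hγ'o y (hsupp y hy)]
    · intro e
      have hxτ : x ∈ τ.support := by rw [e]; exact hmemγ x (Or.inr (Or.inl rfl))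
      exact (hsupp x hxτ) (hmemγ' x (Or.inr (Or.inl rfl)))
  have hnew : (hop σ x).cycleOf x ∉ σ.cycleFactorsFinset := by
    intro hmem
    have h2 := (Equiv.Perm.mem_cycleFactorsFinset_iff.1 hmem).2 x
      (hmemγ' x (Or.inr (Or.inl rfl)))
    rw [Equiv.Perm.cycleOf_apply_self, hvx] at h2
    exact hxc.ne' (σ.injective h2)
  have hset : (hop σ x).cycleFactorsFinset
      = insert ((hop σ x).cycleOf x) (σ.cycleFactorsFinset.erase (σ.cycleOf x)) := by
    ext τ
    constructor
    · intro hτ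
      by_cases he : τ = (hop σ x).cycleOf x
      · exact Finset.mem_insert.2 (Or.inl he)
      · obtain ⟨h1, h2⟩ := key2 τ hτ he
        exact Finset.mem_insert.2 (Or.inr (Finset.mem_erase.2 ⟨h2, h1⟩))
    · intro hτ
      rcases Finset.mem_insert.1 hτ with he | hmem
      · rw [he]; exact hγ'mem
      · obtain ⟨h2, h1⟩ := Finset.mem_erase.1 hmem
        exact key1 τ h1 h2
  rw [hset, Finset.card_insert_of_notMem, Finset.card_erase_of_mem hγmem]
  · have hpos : 0 < σ.cycleFactorsFinset.card := Finset.card_pos.2 ⟨_, hγmem⟩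
    omega
  · intro hmem
    exact hnew (Finset.mem_of_mem_erase hmem)

private lemma fixc_zero (hD : IsDerangement σ) : fixc σ = 0 := by
  unfold fixc
  rw [Finset.card_eq_zero, Finset.filter_eq_empty_iff]
  intro y _
  exact hD y

private lemma hop_cyc (hD : IsDerangement σ) (hx1 : σ⁻¹ x < x) (hx2 : x < σ x) :
    cyc (hop σ x) = cyc σ := by
  unfold cyc
  rw [fixc_zero hD, fixc_zero (hop_isD hD hx1 hx2), Nat.add_zero, Nat.add_zero,
    Equiv.Perm.cycleType_def, Equiv.Perm.cycleType_def, Multiset.card_map, Multiset.card_map,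
    ← Finset.card_def, ← Finset.card_def, hop_factors hx1 hx2]


private lemma hop_x_mem {σ : Equiv.Perm (Fin n)} {x : Fin n}
    (hx1 : σ⁻¹ x < x) (hx2 : x < σ x) :
    x < (hop σ x)⁻¹ x ∧ (hop σ x) x < x := by
  obtain ⟨c, hxc, hdx, -, -, hvx, -, -, -, hix, -, -, -, -⟩ := hop_core hx1 hx2
  exact ⟨by rw [hix]; exact hxc, by rw [hvx]; exact hdx⟩

private lemma hop_rt {σ : Equiv.Perm (Fin n)} {x : Fin n}
    (hx1 : σ⁻¹ x < x) (hx2 : x < σ x) :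
    hop ((hop σ x)⁻¹) x = σ⁻¹ := by
  obtain ⟨c, -, -, -, -, -, -, -, -, -, -, -, hrt, -⟩ := hop_core hx1 hx2
  exact hrt

end Hopping

section Stats

variable {n : ℕ} {σ : Equiv.Perm (Fin n)}

private lemma isD_inv (hD : IsDerangement σ) : IsDerangement σ⁻¹ := by
  intro y e
  exact hD y ((Equiv.Perm.inv_eq_iff_eq.1 e).symm)

private lemma inv_ne (hD : IsDerangement σ) : ∀ y : Fin n, σ⁻¹ y ≠ y :=
  fun y e => hD y ((Equiv.Perm.inv_eq_iff_eq.1 e).symm)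

private lemma card_eq_of_iff {P Q : Fin n → Prop} [DecidablePred P] [DecidablePred Q]
    (h : ∀ y, P y ↔ Q y) : (univ.filter P).card = (univ.filter Q).card := by
  have e : univ.filter P = univ.filter Q := by
    ext y
    simp only [mem_filter, mem_univ, true_and]
    exact h y
  rw [e]

private lemma cda_inv (σ : Equiv.Perm (Fin n)) : cda σ⁻¹ = cdd σ := by
  unfold cda cdd
  apply card_eq_of_iff
  intro y
  rw [inv_inv]
  exact and_comm

private lemma cdd_inv (σ : Equiv.Perm (Fin n)) : cdd σ⁻¹ = cda σ := by
  unfold cda cdd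
  apply card_eq_of_iff
  intro y
  rw [inv_inv]
  exact and_comm

private lemma cval_inv (σ : Equiv.Perm (Fin n)) : cval σ⁻¹ = cval σ := by
  unfold cval
  apply card_eq_of_iff
  intro y
  rw [inv_inv]
  exact and_comm

private lemma cyc_inv (σ : Equiv.Perm (Fin n)) : cyc σ⁻¹ = cyc σ := by
  unfold cyc fixc
  rw [Equiv.Perm.cycleType_inv]
  congr 1
  apply card_eq_of_iff
  intro y
  exact ⟨fun e => ((Equiv.Perm.inv_eq_iff_eq.1 e).symm),
    fun e => Equiv.Perm.inv_eq_iff_eq.2 e.symm⟩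

private lemma filter_split (P Q : Fin n → Prop) [DecidablePred P] [DecidablePred Q]
    [DecidablePred fun y => P y ∧ Q y] [DecidablePred fun y => P y ∧ ¬ Q y] :
    (univ.filter P).card
      = (univ.filter fun y => P y ∧ Q y).card + (univ.filter fun y => P y ∧ ¬ Q y).card := by
  have h := Finset.card_filter_add_card_filter_not
    (s := (univ.filter P)) (p := Q)
  have e1 : ((univ.filter P).filter Q) = (univ.filter fun y => P y ∧ Q y) := by
    ext y
    simp only [mem_filter, mem_univ, true_and]
  have e2 : ((univ.filter P).filter fun y => ¬ Q y) = (univ.filter fun y => P y ∧ ¬ Q y) := by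
    ext y
    simp only [mem_filter, mem_univ, true_and]
  rw [e1, e2] at h
  omega

private lemma card_inE (hD : IsDerangement σ) :
    (univ.filter fun y : Fin n => σ⁻¹ y < y).card = cpk σ + cda σ := by
  have hsp := filter_split (fun y : Fin n => σ⁻¹ y < y) (fun y => σ y < y)
  have b1 : cpk σ = (univ.filter fun y : Fin n => σ⁻¹ y < y ∧ σ y < y).card := by
    unfold cpk
    exact card_eq_of_iff (fun y => Iff.rfl)
  have b2 : cda σ = (univ.filter fun y : Fin n => σ⁻¹ y < y ∧ ¬ σ y < y).card := by
    unfold cda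
    apply card_eq_of_iff
    intro y
    have h1 : σ y ≠ y := hD y
    constructor
    · rintro ⟨a, b⟩; exact ⟨a, not_lt.2 b.le⟩
    · rintro ⟨a, b⟩; exact ⟨a, lt_of_le_of_ne (not_lt.1 b) (Ne.symm h1)⟩
  omega

private lemma card_outE (hD : IsDerangement σ) :
    (univ.filter fun y : Fin n => y < σ y).card = cda σ + cval σ := by
  have hsp := filter_split (fun y : Fin n => y < σ y) (fun y => σ⁻¹ y < y)
  have b1 : cda σ = (univ.filter fun y : Fin n => y < σ y ∧ σ⁻¹ y < y).card := by
    unfold cda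
    apply card_eq_of_iff
    intro y
    exact and_comm
  have b2 : cval σ = (univ.filter fun y : Fin n => y < σ y ∧ ¬ σ⁻¹ y < y).card := by
    unfold cval
    apply card_eq_of_iff
    intro y
    have h2 := inv_ne hD y
    constructor
    · rintro ⟨a, b⟩; exact ⟨b, not_lt.2 a.le⟩
    · rintro ⟨a, b⟩; exact ⟨lt_of_le_of_ne (not_lt.1 b) (Ne.symm h2), a⟩
  omega

private lemma card_EE (σ : Equiv.Perm (Fin n)) :
    (univ.filter fun y : Fin n => σ⁻¹ y < y).card
      = (univ.filter fun y : Fin n => y < σ y).card := by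
  have himg : (univ.filter fun y : Fin n => σ⁻¹ y < y)
      = (univ.filter fun y : Fin n => y < σ y).image σ := by
    ext z
    simp only [mem_filter, mem_univ, true_and, Finset.mem_image]
    constructor
    · intro hz
      refine ⟨σ⁻¹ z, ?_, perm_apply_inv_self σ z⟩
      rw [perm_apply_inv_self]
      exact hz
    · rintro ⟨y, hy, rfl⟩
      rw [perm_inv_apply_self]
      exact hy
  rw [himg, Finset.card_image_of_injective _ σ.injective]

private lemma cpk_eq_cval (hD : IsDerangement σ) : cpk σ = cval σ := by
  have h1 := card_inE hD
  have h2 := card_outE hD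
  have h3 := card_EE σ
  omega

private lemma exc_split (hD : IsDerangement σ) : exc σ = cval σ + cda σ := by
  have h2 := card_outE hD
  have h0 : exc σ = (univ.filter fun y : Fin n => y < σ y).card := by
    unfold exc
    exact card_eq_of_iff (fun y => Iff.rfl)
  omega

private lemma stats_partition (hD : IsDerangement σ) :
    cval σ + cval σ + cda σ + cdd σ = n := by
  have h0 := Finset.card_filter_add_card_filter_not
    (s := (univ : Finset (Fin n))) (p := fun y => σ⁻¹ y < y)
  have hn : (univ : Finset (Fin n)).card = n := by simp
  have h1 := card_inE hD
  have hsp := filter_split (fun y : Fin n => ¬ σ⁻¹ y < y) (fun y => σ y < y)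
  have b1 : cdd σ = (univ.filter fun y : Fin n => (¬ σ⁻¹ y < y) ∧ σ y < y).card := by
    unfold cdd
    apply card_eq_of_iff
    intro y
    have h2' := inv_ne hD y
    constructor
    · rintro ⟨a, b⟩; exact ⟨not_lt.2 a.le, b⟩
    · rintro ⟨a, b⟩; exact ⟨lt_of_le_of_ne (not_lt.1 a) (Ne.symm h2'), b⟩
  have b2 : cval σ = (univ.filter fun y : Fin n => (¬ σ⁻¹ y < y) ∧ ¬ σ y < y).card := by
    unfold cval
    apply card_eq_of_iff
    intro y
    have h1' : σ y ≠ y := hD y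
    have h2' := inv_ne hD y
    constructor
    · rintro ⟨a, b⟩; exact ⟨not_lt.2 a.le, not_lt.2 b.le⟩
    · rintro ⟨a, b⟩
      exact ⟨lt_of_le_of_ne (not_lt.1 a) (Ne.symm h2'), lt_of_le_of_ne (not_lt.1 b) (Ne.symm h1')⟩
  have h3 := cpk_eq_cval hD
  omega

end Stats



section MainSum

variable {n : ℕ}

private lemma pair_identity (q t u v : ℝ) :
    ∑ σ ∈ univ.filter (fun σ : Equiv.Perm (Fin n) => IsDerangement σ),
        (q ^ cyc σ * t ^ cval σ) * ((cda σ : ℝ) * (u ^ (cda σ - 1) * v ^ cdd σ))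
      = ∑ σ ∈ univ.filter (fun σ : Equiv.Perm (Fin n) => IsDerangement σ),
        (q ^ cyc σ * t ^ cval σ) * ((cdd σ : ℝ) * (u ^ cda σ * v ^ (cdd σ - 1))) := by
  have lhs :
      ∑ σ ∈ univ.filter (fun σ : Equiv.Perm (Fin n) => IsDerangement σ),
          (q ^ cyc σ * t ^ cval σ) * ((cda σ : ℝ) * (u ^ (cda σ - 1) * v ^ cdd σ))
        = ∑ p ∈ (univ.filter (fun σ : Equiv.Perm (Fin n) => IsDerangement σ)).sigma
            (fun σ => univ.filter (fun y : Fin n => σ⁻¹ y < y ∧ y < σ y)),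
            (q ^ cyc p.1 * t ^ cval p.1) * (u ^ (cda p.1 - 1) * v ^ cdd p.1) := by
    rw [Finset.sum_sigma]
    apply Finset.sum_congr rfl
    intro σ hσ
    dsimp only
    rw [Finset.sum_const, nsmul_eq_mul]
    have hc : (univ.filter fun y : Fin n => σ⁻¹ y < y ∧ y < σ y).card = cda σ := by
      unfold cda
      exact card_eq_of_iff (fun y => Iff.rfl)
    rw [hc]
    ring
  have rhs :
      ∑ σ ∈ univ.filter (fun σ : Equiv.Perm (Fin n) => IsDerangement σ),
          (q ^ cyc σ * t ^ cval σ) * ((cdd σ : ℝ) * (u ^ cda σ * v ^ (cdd σ - 1)))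
        = ∑ p ∈ (univ.filter (fun σ : Equiv.Perm (Fin n) => IsDerangement σ)).sigma
            (fun σ => univ.filter (fun y : Fin n => y < σ⁻¹ y ∧ σ y < y)),
            (q ^ cyc p.1 * t ^ cval p.1) * (u ^ cda p.1 * v ^ (cdd p.1 - 1)) := by
    rw [Finset.sum_sigma]
    apply Finset.sum_congr rfl
    intro σ hσ
    dsimp only
    rw [Finset.sum_const, nsmul_eq_mul]
    have hc : (univ.filter fun y : Fin n => y < σ⁻¹ y ∧ σ y < y).card = cdd σ := by
      unfold cdd
      exact card_eq_of_iff (fun y => Iff.rfl)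
    rw [hc]
    ring
  rw [lhs, rhs]
  apply Finset.sum_nbij' (i := fun p => ⟨hop p.1 p.2, p.2⟩)
    (j := fun p => ⟨(hop p.1⁻¹ p.2)⁻¹, p.2⟩)
  · rintro ⟨σ, x⟩ hp
    dsimp only at hp ⊢
    rw [Finset.mem_sigma] at hp ⊢
    obtain ⟨ha, hb⟩ := hp
    rw [Finset.mem_filter] at ha hb
    obtain ⟨hx1, hx2⟩ := hb.2
    dsimp only at ha hx1 hx2
    exact ⟨Finset.mem_filter.2 ⟨Finset.mem_univ _, hop_isD ha.2 hx1 hx2⟩,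
      Finset.mem_filter.2 ⟨Finset.mem_univ _, (hop_x_mem hx1 hx2).1, (hop_x_mem hx1 hx2).2⟩⟩
  · rintro ⟨σ, x⟩ hp
    dsimp only at hp ⊢
    rw [Finset.mem_sigma] at hp ⊢
    obtain ⟨ha, hb⟩ := hp
    rw [Finset.mem_filter] at ha hb
    obtain ⟨hx1, hx2⟩ := hb.2
    dsimp only at ha hx1 hx2
    have c1 : (σ⁻¹)⁻¹ x < x := by rw [inv_inv]; exact hx2
    have c2 : x < σ⁻¹ x := hx1
    refine ⟨Finset.mem_filter.2 ⟨Finset.mem_univ _, isD_inv (hop_isD (isD_inv ha.2) c1 c2)⟩,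
      Finset.mem_filter.2 ⟨Finset.mem_univ _, ?_, ?_⟩⟩
    · show ((hop σ⁻¹ x)⁻¹)⁻¹ x < x
      rw [inv_inv]
      exact (hop_x_mem c1 c2).2
    · exact (hop_x_mem c1 c2).1
  · rintro ⟨σ, x⟩ hp
    dsimp only at hp ⊢
    rw [Finset.mem_sigma] at hp
    obtain ⟨ha, hb⟩ := hp
    rw [Finset.mem_filter] at ha hb
    obtain ⟨hx1, hx2⟩ := hb.2
    dsimp only at ha hx1 hx2
    have h := hop_rt hx1 hx2
    show (⟨(hop (hop σ x)⁻¹ x)⁻¹, x⟩ : Σ _ : Equiv.Perm (Fin n), Fin n) = ⟨σ, x⟩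
    rw [h, inv_inv]
  · rintro ⟨σ, x⟩ hp
    dsimp only at hp ⊢
    rw [Finset.mem_sigma] at hp
    obtain ⟨ha, hb⟩ := hp
    rw [Finset.mem_filter] at ha hb
    obtain ⟨hx1, hx2⟩ := hb.2
    dsimp only at ha hx1 hx2
    have c1 : (σ⁻¹)⁻¹ x < x := by rw [inv_inv]; exact hx2
    have c2 : x < σ⁻¹ x := hx1
    have h := hop_rt c1 c2
    show (⟨hop ((hop σ⁻¹ x)⁻¹) x, x⟩ : Σ _ : Equiv.Perm (Fin n), Fin n) = ⟨σ, x⟩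
    rw [h, inv_inv]
  · rintro ⟨σ, x⟩ hp
    dsimp only at hp ⊢
    rw [Finset.mem_sigma] at hp
    obtain ⟨ha, hb⟩ := hp
    rw [Finset.mem_filter] at ha hb
    obtain ⟨hx1, hx2⟩ := hb.2
    dsimp only at ha hx1 hx2
    have e1 := hop_cyc ha.2 hx1 hx2
    have e2 := hop_cval hx1 hx2
    have e3 := hop_cda hx1 hx2
    have e4 := hop_cdd hx1 hx2
    show (q ^ cyc σ * t ^ cval σ) * (u ^ (cda σ - 1) * v ^ cdd σ)
        = (q ^ cyc (hop σ x) * t ^ cval (hop σ x))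
            * (u ^ cda (hop σ x) * v ^ (cdd (hop σ x) - 1))
    rw [e1, e2]
    have e5 : cda σ - 1 = cda (hop σ x) := by omega
    have e6 : cdd (hop σ x) - 1 = cdd σ := by omega
    rw [e5, e6]

private lemma line_const (q t : ℝ) (s1 s2 : ℝ) :
    ∑ σ ∈ univ.filter (fun σ : Equiv.Perm (Fin n) => IsDerangement σ),
        (q ^ cyc σ * t ^ cval σ) * ((t + s1) ^ cda σ * (1 - s1) ^ cdd σ)
      = ∑ σ ∈ univ.filter (fun σ : Equiv.Perm (Fin n) => IsDerangement σ),
        (q ^ cyc σ * t ^ cval σ) * ((t + s2) ^ cda σ * (1 - s2) ^ cdd σ) := by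
  have hderiv : ∀ s : ℝ, HasDerivAt
      (fun y : ℝ => ∑ σ ∈ univ.filter (fun σ : Equiv.Perm (Fin n) => IsDerangement σ),
        (q ^ cyc σ * t ^ cval σ) * ((t + y) ^ cda σ * (1 - y) ^ cdd σ)) 0 s := by
    intro s
    have hterm : ∀ σ : Equiv.Perm (Fin n), HasDerivAt
        (fun y : ℝ => (q ^ cyc σ * t ^ cval σ) * ((t + y) ^ cda σ * (1 - y) ^ cdd σ))
        ((q ^ cyc σ * t ^ cval σ) * ((cda σ : ℝ) * ((t + s) ^ (cda σ - 1) * (1 - s) ^ cdd σ))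
          - (q ^ cyc σ * t ^ cval σ)
              * ((cdd σ : ℝ) * ((t + s) ^ cda σ * (1 - s) ^ (cdd σ - 1)))) s := by
      intro σ
      have h1 : HasDerivAt (fun y : ℝ => (t + y) ^ cda σ)
          ((cda σ : ℝ) * (t + s) ^ (cda σ - 1)) s := by
        simpa using ((hasDerivAt_id s).const_add t).fun_pow (cda σ)
      have h2 : HasDerivAt (fun y : ℝ => (1 - y) ^ cdd σ)
          (-((cdd σ : ℝ) * (1 - s) ^ (cdd σ - 1))) s := by
        simpa using ((hasDerivAt_id s).const_sub 1).fun_pow (cdd σ)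
      have h3 := (h1.fun_mul h2).const_mul (q ^ cyc σ * t ^ cval σ)
      refine h3.congr_deriv ?_
      ring
    have hsum := HasDerivAt.fun_sum
      (fun σ (_ : σ ∈ univ.filter (fun σ : Equiv.Perm (Fin n) => IsDerangement σ)) => hterm σ)
    have hzero : (∑ σ ∈ univ.filter (fun σ : Equiv.Perm (Fin n) => IsDerangement σ),
        ((q ^ cyc σ * t ^ cval σ) * ((cda σ : ℝ) * ((t + s) ^ (cda σ - 1) * (1 - s) ^ cdd σ))
          - (q ^ cyc σ * t ^ cval σ)
              * ((cdd σ : ℝ) * ((t + s) ^ cda σ * (1 - s) ^ (cdd σ - 1))))) = 0 := by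
      rw [Finset.sum_sub_distrib, sub_eq_zero]
      exact pair_identity q t (t + s) (1 - s)
    rw [hzero] at hsum
    exact hsum
  have hdiff : Differentiable ℝ
      (fun y : ℝ => ∑ σ ∈ univ.filter (fun σ : Equiv.Perm (Fin n) => IsDerangement σ),
        (q ^ cyc σ * t ^ cval σ) * ((t + y) ^ cda σ * (1 - y) ^ cdd σ)) :=
    fun s => (hderiv s).differentiableAt
  have hd0 : ∀ s : ℝ, deriv
      (fun y : ℝ => ∑ σ ∈ univ.filter (fun σ : Equiv.Perm (Fin n) => IsDerangement σ),
        (q ^ cyc σ * t ^ cval σ) * ((t + y) ^ cda σ * (1 - y) ^ cdd σ)) s = 0 :=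
    fun s => (hderiv s).deriv
  exact is_const_of_deriv_eq_zero hdiff hd0 s1 s2

end MainSum


theorem stmt8 (n : ℕ) (hn : 1 ≤ n) (q x t : ℝ) (h : (1 + x) * (x + t) * (1 + x * t) ≠ 0) :
    ∑ σ ∈ Finset.univ.filter (fun σ : Equiv.Perm (Fin n) => IsDerangement σ),
        q ^ cyc σ * t ^ exc σ =
      ((1 + x * t) / (1 + x)) ^ n *
        ∑ σ ∈ Finset.univ.filter (fun σ : Equiv.Perm (Fin n) => IsDerangement σ),
          q ^ cyc σ * ((1 + x) ^ 2 * t / ((x + t) * (1 + x * t))) ^ cpk σ * ((x + t) / (1 + x * t)) ^ exc σ := by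
  rw [mul_ne_zero_iff, mul_ne_zero_iff] at h
  obtain ⟨⟨h1, h2⟩, h3⟩ := h
  have hLHS : (∑ σ ∈ Finset.univ.filter (fun σ : Equiv.Perm (Fin n) => IsDerangement σ),
        q ^ cyc σ * t ^ exc σ)
      = ∑ σ ∈ Finset.univ.filter (fun σ : Equiv.Perm (Fin n) => IsDerangement σ),
          (q ^ cyc σ * t ^ cval σ) * ((t + 0) ^ cda σ * (1 - 0) ^ cdd σ) := by
    apply Finset.sum_congr rfl
    intro σ hσ
    have hD : IsDerangement σ := (Finset.mem_filter.1 hσ).2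
    rw [exc_split hD, pow_add]
    norm_num
    ring
  have hRHS : ((1 + x * t) / (1 + x)) ^ n *
        ∑ σ ∈ Finset.univ.filter (fun σ : Equiv.Perm (Fin n) => IsDerangement σ),
          q ^ cyc σ * ((1 + x) ^ 2 * t / ((x + t) * (1 + x * t))) ^ cpk σ
            * ((x + t) / (1 + x * t)) ^ exc σ
      = ∑ σ ∈ Finset.univ.filter (fun σ : Equiv.Perm (Fin n) => IsDerangement σ),
          (q ^ cyc σ * t ^ cval σ) * ((t + x * (1 - t) / (1 + x)) ^ cda σ
            * (1 - x * (1 - t) / (1 + x)) ^ cdd σ) := by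
    rw [Finset.mul_sum]
    apply Finset.sum_congr rfl
    intro σ hσ
    have hD : IsDerangement σ := (Finset.mem_filter.1 hσ).2
    have hp : cpk σ = cval σ := cpk_eq_cval hD
    have hexc : exc σ = cval σ + cda σ := exc_split hD
    have hnn : cval σ + cval σ + cda σ + cdd σ = n := stats_partition hD
    have hu : t + x * (1 - t) / (1 + x) = (x + t) / (1 + x) := by
      field_simp
      ring
    have hv : 1 - x * (1 - t) / (1 + x) = (1 + x * t) / (1 + x) := by
      field_simp
      ring
    have e1 : ((1 + x * t) / (1 + x)) * (((1 + x * t) / (1 + x)) *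
        (((1 + x) ^ 2 * t / ((x + t) * (1 + x * t))) * ((x + t) / (1 + x * t)))) = t := by
      field_simp
    have e2 : ((1 + x * t) / (1 + x)) * ((x + t) / (1 + x * t)) = (x + t) / (1 + x) := by
      rw [div_mul_div_comm]
      rw [div_eq_div_iff (by exact mul_ne_zero h1 h3) h1]
      ring
    have hCn : ((1 + x * t) / (1 + x)) ^ n
        = ((1 + x * t) / (1 + x)) ^ cval σ * ((1 + x * t) / (1 + x)) ^ cval σ
          * ((1 + x * t) / (1 + x)) ^ cda σ * ((1 + x * t) / (1 + x)) ^ cdd σ := by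
      rw [← pow_add, ← pow_add, ← pow_add, hnn]
    have f1 : t ^ cval σ = (((1 + x * t) / (1 + x)) * (((1 + x * t) / (1 + x)) *
        (((1 + x) ^ 2 * t / ((x + t) * (1 + x * t))) * ((x + t) / (1 + x * t))))) ^ cval σ := by
      rw [e1]
    have f2 : ((x + t) / (1 + x)) ^ cda σ
        = (((1 + x * t) / (1 + x)) * ((x + t) / (1 + x * t))) ^ cda σ := by
      rw [e2]
    rw [hu, hv, hp, hexc, hCn]
    conv_rhs => rw [f1, f2]
    simp only [mul_pow, pow_add]
    ring
  rw [hLHS, hRHS]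
  exact line_const q t 0 (x * (1 - t) / (1 + x))

end EulerExc
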